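/- Let q ∈ ℂ with 0 < |q| ≤ 0.31 and x ∈ ℂ with |x| ≤ 8.842. Then the partial derivatives θ_x(q,x) and θ_q(q,x) of θ(q,x) = ∑_{j=0}^∞ q^{j(j+1)/2} x^j do not both vanish. -/

import Mathlib

open Complex Filter Topology

/-- The partial theta function θ(q,x) = ∑_{j=0}^∞ q^{j(j+1)/2} x^j. -/
noncomputable def theta (q x : ℂ) : ℂ := ∑' j : ℕ, q ^ (j * (j + 1) / 2) * x ^ j

lemma tri_succ (n : ℕ) : (n+1)*(n+2)/2 = n*(n+1)/2 + (n+1) := by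
  obtain ⟨c, hc⟩ := Nat.even_mul_succ_self n
  have e : (n+1)*(n+2) = n*(n+1) + 2*(n+1) := by ring
  rw [e, hc]; omega

lemma master {a b : ℝ} (ha : 0 < a) (ha1 : a < 1) (hb : 0 < b) :
    Summable (fun n : ℕ => ((n:ℝ)+1)^2 * a ^ (n*(n+1)/2) * b ^ n) := by
  apply summable_of_ratio_norm_eventually_le (r := 1/2) (by norm_num)
  have h0 : Tendsto (fun n : ℕ => a ^ (n+1) * b) atTop (nhds 0) := by
    have := (tendsto_pow_atTop_nhds_zero_of_lt_one ha.le ha1).mul_const b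
    rw [zero_mul] at this
    exact this.comp (tendsto_add_atTop_nat 1)
  have h1 : ∀ᶠ n : ℕ in atTop, a ^ (n+1) * b < 1/8 :=
    h0.eventually (eventually_lt_nhds (by norm_num))
  filter_upwards [h1] with n hn
  have hfn : (0:ℝ) < ((n:ℝ)+1)^2 * a ^ (n*(n+1)/2) * b ^ n := by positivity
  rw [Real.norm_eq_abs, Real.norm_eq_abs, abs_of_pos (by positivity), abs_of_pos hfn]
  rw [tri_succ]
  have key : ((n:ℝ)+1+1)^2 * (a ^ (n+1) * b) ≤ (1/2) * ((n:ℝ)+1)^2 := by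
    have h2 : ((n:ℝ)+1+1)^2 ≤ 4 * ((n:ℝ)+1)^2 := by nlinarith [Nat.cast_nonneg (α := ℝ) n]
    have h3 : 0 ≤ a ^ (n+1) * b := by positivity
    nlinarith [sq_nonneg ((n:ℝ)+1)]
  calc ((↑(n+1):ℝ)+1)^2 * a ^ (n*(n+1)/2 + (n+1)) * b ^ (n+1)
      = (((n:ℝ)+1+1)^2 * (a ^ (n+1) * b)) * (a ^ (n*(n+1)/2) * b ^ n) := by
        push_cast; ring
    _ ≤ ((1/2) * ((n:ℝ)+1)^2) * (a ^ (n*(n+1)/2) * b ^ n) := by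
        apply mul_le_mul_of_nonneg_right key (by positivity)
    _ = 1/2 * (((n:ℝ)+1)^2 * a ^ (n*(n+1)/2) * b ^ n) := by ring

lemma derivX {q x : ℂ} (hq' : ‖q‖ ≤ 0.31) (hx : ‖x‖ ≤ 8.842) :
    HasDerivAt (theta q) (∑' n : ℕ, q ^ (n*(n+1)/2) * ((n:ℂ) * x ^ (n-1))) x := by
  have key : HasDerivAt (fun z : ℂ => ∑' n : ℕ, q ^ (n*(n+1)/2) * z ^ n)
      (∑' n : ℕ, q ^ (n*(n+1)/2) * ((n:ℂ) * x ^ (n-1))) x := by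
    apply hasDerivAt_tsum_of_isPreconnected
      (u := fun n : ℕ => ((n:ℝ)+1)^2 * (0.31:ℝ) ^ (n*(n+1)/2) * 9 ^ n)
      (master (by norm_num) (by norm_num) (by norm_num))
      Metric.isOpen_ball ((convex_ball (0:ℂ) 9).isPreconnected)
      (fun n y _ => (hasDerivAt_pow n y).const_mul _)
      ?_ (Metric.mem_ball_self (by norm_num)) ?_
      (mem_ball_zero_iff.2 (lt_of_le_of_lt (by exact_mod_cast hx) (by norm_num)))
    · intro n y hy
      rw [mem_ball_zero_iff] at hy
      rw [norm_mul, norm_mul, norm_pow, norm_pow, Complex.norm_natCast]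
      have h1 : ‖q‖ ^ (n*(n+1)/2) ≤ (0.31:ℝ) ^ (n*(n+1)/2) :=
        pow_le_pow_left₀ (norm_nonneg _) hq' _
      have h2 : ‖y‖ ^ (n-1) ≤ (9:ℝ) ^ n := by
        calc ‖y‖ ^ (n-1) ≤ (9:ℝ) ^ (n-1) := pow_le_pow_left₀ (norm_nonneg _) hy.le _
          _ ≤ (9:ℝ) ^ n := pow_le_pow_right₀ (by norm_num) (Nat.sub_le n 1)
      have h3 : (n:ℝ) ≤ ((n:ℝ)+1)^2 := by nlinarith [Nat.cast_nonneg (α := ℝ) n]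
      calc ‖q‖ ^ (n*(n+1)/2) * ((n:ℝ) * ‖y‖ ^ (n-1))
          ≤ (0.31:ℝ) ^ (n*(n+1)/2) * (((n:ℝ)+1)^2 * 9 ^ n) := by
            apply mul_le_mul h1 ?_ (by positivity) (by positivity)
            exact mul_le_mul h3 h2 (by positivity) (by positivity)
        _ = ((n:ℝ)+1)^2 * (0.31:ℝ) ^ (n*(n+1)/2) * 9 ^ n := by ring
    · apply summable_of_ne_finset_zero (s := {0})
      intro n hn
      simp only [Finset.mem_singleton] at hn
      rw [zero_pow hn, mul_zero]
  exact key

lemma derivQ {q x : ℂ} (hq' : ‖q‖ ≤ 0.31) (hx : ‖x‖ ≤ 8.842) :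
    HasDerivAt (fun q' => theta q' x)
      (∑' n : ℕ, ((↑(n*(n+1)/2) : ℂ) * q ^ (n*(n+1)/2 - 1)) * x ^ n) q := by
  have key : HasDerivAt (fun q' : ℂ => ∑' n : ℕ, q' ^ (n*(n+1)/2) * x ^ n)
      (∑' n : ℕ, ((↑(n*(n+1)/2) : ℂ) * q ^ (n*(n+1)/2 - 1)) * x ^ n) q := by
    apply hasDerivAt_tsum_of_isPreconnected
      (u := fun n : ℕ => 25/8 * (((n:ℝ)+1)^2 * (0.32:ℝ) ^ (n*(n+1)/2) * 8.842 ^ n))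
      ((master (a := 0.32) (b := 8.842) (by norm_num) (by norm_num) (by norm_num)).mul_left _)
      Metric.isOpen_ball ((convex_ball (0:ℂ) 0.32).isPreconnected)
      (fun n y _ => (hasDerivAt_pow _ y).mul_const _)
      ?_ (Metric.mem_ball_self (by norm_num)) ?_
      (mem_ball_zero_iff.2 (lt_of_le_of_lt (by exact_mod_cast hq') (by norm_num)))
    · intro n y hy
      rw [mem_ball_zero_iff] at hy
      set m := n*(n+1)/2 with hm
      rw [norm_mul, norm_mul, norm_pow, norm_pow, Complex.norm_natCast]
      have hxn : ‖x‖ ^ n ≤ (8.842:ℝ) ^ n := pow_le_pow_left₀ (norm_nonneg _) hx _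
      have hmb : (m:ℝ) ≤ ((n:ℝ)+1)^2 := by
        have h1 : m ≤ (n+1)*(n+1) := by
          have := Nat.div_le_self (n*(n+1)) 2
          calc m ≤ n*(n+1) := Nat.div_le_self _ _
            _ ≤ (n+1)*(n+1) := by nlinarith
        calc (m:ℝ) ≤ ((n+1)*(n+1) : ℕ) := by exact_mod_cast h1
          _ = ((n:ℝ)+1)^2 := by push_cast; ring
      have hcoef : (m:ℝ) * ‖y‖ ^ (m-1) ≤ ((n:ℝ)+1)^2 * ((0.32:ℝ) ^ m * (25/8)) := by
        rcases Nat.eq_zero_or_pos m with h0 | h1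
        · rw [h0]; simp; positivity
        · have e1 : ‖y‖ ^ (m-1) ≤ (0.32:ℝ) ^ (m-1) := pow_le_pow_left₀ (norm_nonneg _) hy.le _
          have e0 : (0.32:ℝ) ^ (m-1) * 0.32 = 0.32 ^ m :=
            pow_sub_one_mul (Nat.one_le_iff_ne_zero.mp h1) _
          have e2 : (0.32:ℝ) ^ (m-1) = (0.32:ℝ)^m * (25/8) := by linarith
          calc (m:ℝ) * ‖y‖ ^ (m-1) ≤ ((n:ℝ)+1)^2 * (0.32:ℝ) ^ (m-1) := by
                apply mul_le_mul hmb e1 (by positivity) (by positivity)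
            _ = ((n:ℝ)+1)^2 * ((0.32:ℝ) ^ m * (25/8)) := by rw [e2]
      calc (m:ℝ) * ‖y‖ ^ (m-1) * ‖x‖ ^ n
          ≤ (((n:ℝ)+1)^2 * ((0.32:ℝ) ^ m * (25/8))) * (8.842:ℝ) ^ n := by
            apply mul_le_mul hcoef hxn (by positivity) (by positivity)
        _ = 25/8 * (((n:ℝ)+1)^2 * (0.32:ℝ) ^ m * 8.842 ^ n) := by ring
    · apply summable_of_ne_finset_zero (s := {0})
      intro n hn
      simp only [Finset.mem_singleton] at hn
      have : n*(n+1)/2 ≠ 0 := by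
        intro h
        have := Nat.div_le_self (n*(n+1)) 2
        have h2 : n*(n+1)/2 * 2 = n*(n+1) :=
          Nat.div_mul_cancel (Nat.even_mul_succ_self n).two_dvd
        have h3 : n ≤ n*(n+1) := Nat.le_mul_of_pos_right n (by omega)
        omega
      rw [zero_pow this, zero_mul]
  exact key

lemma tri_succ' (n : ℕ) : (n+1)*(n+2)/2 = n*(n+1)/2 + (n+1) := by
  obtain ⟨c, hc⟩ := Nat.even_mul_succ_self n
  have e : (n+1)*(n+2) = n*(n+1) + 2*(n+1) := by ring
  rw [e, hc]; omega

lemma tri_le_sq (n : ℕ) : ((n*(n+1)/2 : ℕ):ℝ) ≤ ((n:ℝ)+1)^2 := by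
  have h1 : n*(n+1)/2 ≤ (n+1)*(n+1) := by
    calc n*(n+1)/2 ≤ n*(n+1) := Nat.div_le_self _ _
      _ ≤ (n+1)*(n+1) := by nlinarith
  calc ((n*(n+1)/2 : ℕ):ℝ) ≤ (((n+1)*(n+1) : ℕ) : ℝ) := by exact_mod_cast h1
    _ = ((n:ℝ)+1)^2 := by push_cast; ring

lemma tri_ge (n : ℕ) : n ≤ n*(n+1)/2 := by
  rw [Nat.le_div_iff_mul_le (by norm_num)]
  cases n with
  | zero => simp
  | succ k => exact Nat.mul_le_mul_left (k+1) (by omega)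

lemma tri_pred (n : ℕ) : n*(n-1)/2 + n = n*(n+1)/2 := by
  cases n with
  | zero => rfl
  | succ k =>
      have h : (k+1) - 1 = k := rfl
      rw [h, mul_comm (k+1) k, ← tri_succ' k]

lemma exp_shift (n : ℕ) : (n+2)*(n+3)/2 = n*(n+5)/2 + 3 := by
  obtain ⟨c, hc⟩ := Nat.even_mul_succ_self n
  have e1 : (n+2)*(n+3) = n*(n+1) + 4*n + 6 := by ring
  have e2 : n*(n+5) = n*(n+1) + 4*n := by ring
  rw [e1, e2, hc]; omega

lemma coef_le {q x : ℂ} (hq' : ‖q‖ ≤ 0.31) (hx : ‖x‖ ≤ 8.842) {c e n : ℕ}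
    (hc : (c:ℝ) ≤ ((n:ℝ)+1)^2) (he : n*(n+1)/2 ≤ e) :
    ‖(c:ℂ) * q ^ e * x ^ n‖ ≤ ((n:ℝ)+1)^2 * (0.31:ℝ)^(n*(n+1)/2) * 8.842^n := by
  rw [norm_mul, norm_mul, norm_pow, norm_pow, Complex.norm_natCast]
  have h1 : ‖q‖^e ≤ (0.31:ℝ)^(n*(n+1)/2) :=
    le_trans (pow_le_pow_left₀ (norm_nonneg _) hq' _)
      (pow_le_pow_of_le_one (by norm_num) (by norm_num) he)
  have h2 : ‖x‖^n ≤ (8.842:ℝ)^n := pow_le_pow_left₀ (norm_nonneg _) hx _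
  calc (c:ℝ) * ‖q‖^e * ‖x‖^n ≤ (((n:ℝ)+1)^2 * (0.31:ℝ)^(n*(n+1)/2)) * (8.842:ℝ)^n := by
        apply mul_le_mul ?_ h2 (by positivity) (by positivity)
        exact mul_le_mul hc h1 (by positivity) (by positivity)
    _ = ((n:ℝ)+1)^2 * (0.31:ℝ)^(n*(n+1)/2) * 8.842^n := by ring

lemma summable_aux {q x : ℂ} (hq' : ‖q‖ ≤ 0.31) (hx : ‖x‖ ≤ 8.842) (c e : ℕ → ℕ)
    (hc : ∀ n, ((c n):ℝ) ≤ ((n:ℝ)+1)^2) (he : ∀ n, n*(n+1)/2 ≤ e n) :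
    Summable (fun n : ℕ => ((c n):ℂ) * q ^ (e n) * x ^ n) :=
  Summable.of_norm_bounded (master (by norm_num) (by norm_num) (by norm_num))
    (fun n => coef_le hq' hx (hc n) (he n))

lemma head1 {q x : ℂ} (hq' : ‖q‖ ≤ 0.31) (hx : ‖x‖ ≤ 8.842) :
    ‖((((0+1+1)*(0+1+2)/2 : ℕ)):ℂ) * q ^ ((0+1)*(0+1+5)/2) * x ^ (0+1)‖ ≤ 3*(0.31:ℝ)^3*8.842 := by
  norm_num [norm_mul, norm_pow]
  have a1 : ‖q‖ ^ 3 ≤ (0.31:ℝ)^3 := pow_le_pow_left₀ (norm_nonneg q) hq' 3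
  nlinarith [norm_nonneg x, norm_nonneg q, pow_nonneg (norm_nonneg q) 3, hx]

lemma head2 {q x : ℂ} (hq' : ‖q‖ ≤ 0.31) (hx : ‖x‖ ≤ 8.842) :
    ‖((((0+1+1+1)*(0+1+1+2)/2 : ℕ)):ℂ) * q ^ ((0+1+1)*(0+1+1+5)/2) * x ^ (0+1+1)‖ ≤ 6*(0.31:ℝ)^7*8.842^2 := by
  norm_num [norm_mul, norm_pow]
  have a1 : ‖q‖ ^ 7 ≤ (0.31:ℝ)^7 := pow_le_pow_left₀ (norm_nonneg q) hq' 7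
  have a2 : ‖x‖ ^ 2 ≤ (8.842:ℝ)^2 := pow_le_pow_left₀ (norm_nonneg x) hx 2
  nlinarith [pow_nonneg (norm_nonneg q) 7, pow_nonneg (norm_nonneg x) 2]

lemma pow3 : ∀ n : ℕ, (n+4)*(n+5) ≤ 2*3^(n+3) := by
  intro n
  induction n with
  | zero => norm_num
  | succ k ih =>
    have h : (k+5)*(k+6) ≤ 3*((k+4)*(k+5)) := by nlinarith
    calc (k+1+4)*(k+1+5) = (k+5)*(k+6) := by ring
      _ ≤ 3*((k+4)*(k+5)) := h
      _ ≤ 3*(2*3^(k+3)) := by omega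
      _ = 2*3^(k+1+3) := by ring

lemma tailbound {q x : ℂ} (hqn : ‖q‖ ≤ 0.31) (hxn : ‖x‖ ≤ 8.842) :
    ∀ n : ℕ, ‖(↑((n+4)*(n+5)/2):ℂ) * q ^ ((n+3)*(n+8)/2) * x ^ (n+3)‖
      ≤ ((3:ℝ)^3*(0.31:ℝ)^12*8.842^3) * (3*(0.31:ℝ)^5*8.842)^n := by
  intro n
  rw [norm_mul, norm_mul, norm_pow, norm_pow, Complex.norm_natCast]
  have c1 : (((n+4)*(n+5)/2 : ℕ):ℝ) ≤ (3:ℝ)^(n+3) := by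
    have hn : (n+4)*(n+5)/2 ≤ 3^(n+3) := by
      have := pow3 n; omega
    calc (((n+4)*(n+5)/2 : ℕ):ℝ) ≤ ((3^(n+3) : ℕ):ℝ) := by exact_mod_cast hn
      _ = (3:ℝ)^(n+3) := by push_cast; ring
  have c2 : ‖q‖^((n+3)*(n+8)/2) ≤ (0.31:ℝ)^(5*n+12) := by
    have hle : 5*n+12 ≤ (n+3)*(n+8)/2 := by
      have e : (n+3)*(n+8) = n*n+11*n+24 := by ring
      rw [e]; omega
    calc ‖q‖^((n+3)*(n+8)/2) ≤ (0.31:ℝ)^((n+3)*(n+8)/2) :=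
          pow_le_pow_left₀ (norm_nonneg _) hqn _
      _ ≤ (0.31:ℝ)^(5*n+12) := pow_le_pow_of_le_one (by norm_num) (by norm_num) hle
  have c3 : ‖x‖^(n+3) ≤ (8.842:ℝ)^(n+3) := pow_le_pow_left₀ (norm_nonneg _) hxn _
  calc (((n+4)*(n+5)/2 : ℕ):ℝ) * ‖q‖^((n+3)*(n+8)/2) * ‖x‖^(n+3)
      ≤ ((3:ℝ)^(n+3) * (0.31:ℝ)^(5*n+12)) * (8.842:ℝ)^(n+3) := by
        apply mul_le_mul ?_ c3 (by positivity) (by positivity)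
        exact mul_le_mul c1 c2 (by positivity) (by positivity)
    _ = ((3:ℝ)^3*(0.31:ℝ)^12*8.842^3) * (3*(0.31:ℝ)^5*8.842)^n := by
        rw [pow_add (3:ℝ) n 3, pow_add (0.31:ℝ) (5*n) 12, pow_mul (0.31:ℝ) 5 n,
          pow_add (8.842:ℝ) n 3, mul_pow, mul_pow]
        ring

set_option maxHeartbeats 1600000 in
/-- For 0 < |q| ≤ 0.31 and |x| ≤ 8.842, θ_x and θ_q do not both vanish. -/
theorem theta_x_theta_q_not_both_zero (q x : ℂ) (hq : 0 < ‖q‖)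
    (hq' : ‖q‖ ≤ 0.31) (hx : ‖x‖ ≤ 8.842) :
    ¬ (deriv (theta q) x = 0 ∧ deriv (fun q' => theta q' x) q = 0) := by
  rintro ⟨hTx, hTq⟩
  rw [(derivX hq' hx).deriv] at hTx
  rw [(derivQ hq' hx).deriv] at hTq
  have hqn : ‖q‖ ≤ 0.31 := hq'
  have hxn : ‖x‖ ≤ 8.842 := hx
  have hq0 : q ≠ 0 := by
    intro h; rw [h] at hq; simp at hq
  -- case x = 0
  by_cases hx0 : x = 0
  · rw [hx0] at hTx
    have : (∑' n : ℕ, q ^ (n*(n+1)/2) * ((n:ℂ) * (0:ℂ) ^ (n-1))) = q := by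
      rw [tsum_eq_single 1]
      · norm_num
      · intro n hn
        match n, hn with
        | 0, _ => norm_num
        | (k+2), _ =>
            have : (0:ℂ) ^ (k+2-1) = 0 := zero_pow (by omega)
            rw [this]; ring
    rw [this] at hTx
    exact hq0 hTx
  -- main case
  · have SA : Summable (fun n : ℕ => (↑(n*(n+1)/2) : ℂ) * q ^ (n*(n+1)/2) * x ^ n) :=
      summable_aux hqn hxn _ _ (fun n => tri_le_sq n) (fun n => le_refl _)
    have SB : Summable (fun n : ℕ => (n : ℂ) * q ^ (n*(n+1)/2) * x ^ n) := by
      have := summable_aux hqn hxn (fun n => n) (fun n => n*(n+1)/2)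
        (fun n => by nlinarith [Nat.cast_nonneg (α := ℝ) n]) (fun n => le_refl _)
      exact this
    have SC : Summable (fun n : ℕ => (↑(n*(n-1)/2) : ℂ) * q ^ (n*(n+1)/2) * x ^ n) := by
      apply summable_aux hqn hxn _ _ ?_ (fun n => le_refl _)
      intro n
      calc ((n*(n-1)/2 : ℕ):ℝ) ≤ ((n*(n+1)/2 : ℕ):ℝ) := by
            have : n*(n-1)/2 ≤ n*(n+1)/2 := Nat.div_le_div_right (Nat.mul_le_mul_left n (by omega))
            exact_mod_cast this
        _ ≤ ((n:ℝ)+1)^2 := tri_le_sq n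
    have Sd : Summable (fun n : ℕ => (↑((n+1)*(n+2)/2) : ℂ) * q ^ (n*(n+5)/2) * x ^ n) := by
      apply summable_aux hqn hxn _ _ ?_ ?_
      · intro n
        have h1 : (n+1)*(n+2)/2 ≤ (n+1)*(n+1) := by
          have : (n+1)*(n+2) ≤ 2*((n+1)*(n+1)) := by nlinarith
          omega
        calc ((((n+1)*(n+2)/2 : ℕ)):ℝ) ≤ (((n+1)*(n+1) : ℕ):ℝ) := by exact_mod_cast h1
          _ = ((n:ℝ)+1)^2 := by push_cast; ring
      · intro n
        apply Nat.div_le_div_right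
        exact Nat.mul_le_mul_left n (by omega)
    -- A = 0
    have hA : (∑' n : ℕ, (↑(n*(n+1)/2) : ℂ) * q ^ (n*(n+1)/2) * x ^ n) = 0 := by
      have e : (∑' n : ℕ, (↑(n*(n+1)/2) : ℂ) * q ^ (n*(n+1)/2) * x ^ n)
          = q * ∑' n : ℕ, ((↑(n*(n+1)/2) : ℂ) * q ^ (n*(n+1)/2 - 1)) * x ^ n := by
        rw [← tsum_mul_left]
        apply tsum_congr
        intro n
        symm
        rcases Nat.eq_zero_or_pos (n*(n+1)/2) with h0 | h1
        · rw [h0]; norm_num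
        · have : q ^ (n*(n+1)/2 - 1) * q = q ^ (n*(n+1)/2) :=
            pow_sub_one_mul (Nat.one_le_iff_ne_zero.mp h1) q
          calc q * ((↑(n*(n+1)/2) : ℂ) * q ^ (n*(n+1)/2 - 1) * x ^ n)
              = (↑(n*(n+1)/2) : ℂ) * (q ^ (n*(n+1)/2 - 1) * q) * x ^ n := by ring
            _ = (↑(n*(n+1)/2) : ℂ) * q ^ (n*(n+1)/2) * x ^ n := by rw [this]
      rw [e, hTq, mul_zero]
    -- B = 0
    have hB : (∑' n : ℕ, (n : ℂ) * q ^ (n*(n+1)/2) * x ^ n) = 0 := by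
      have e : (∑' n : ℕ, (n : ℂ) * q ^ (n*(n+1)/2) * x ^ n)
          = x * ∑' n : ℕ, q ^ (n*(n+1)/2) * ((n:ℂ) * x ^ (n-1)) := by
        rw [← tsum_mul_left]
        apply tsum_congr
        intro n
        symm
        cases n with
        | zero => norm_num
        | succ k =>
            have : x ^ (k+1-1) * x = x ^ (k+1) := pow_sub_one_mul (by omega) x
            calc x * (q ^ ((k+1)*(k+1+1)/2) * ((↑(k+1):ℂ) * x ^ (k+1-1)))
                = (↑(k+1):ℂ) * q ^ ((k+1)*(k+1+1)/2) * (x ^ (k+1-1) * x) := by ring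
              _ = (↑(k+1):ℂ) * q ^ ((k+1)*(k+1+1)/2) * x ^ (k+1) := by rw [this]
      rw [e, hTx, mul_zero]
    -- C = A - B = 0
    have hC : (∑' n : ℕ, (↑(n*(n-1)/2) : ℂ) * q ^ (n*(n+1)/2) * x ^ n) = 0 := by
      have e : ∀ n : ℕ, (↑(n*(n-1)/2) : ℂ) * q ^ (n*(n+1)/2) * x ^ n
          = (↑(n*(n+1)/2) : ℂ) * q ^ (n*(n+1)/2) * x ^ n
            - (n : ℂ) * q ^ (n*(n+1)/2) * x ^ n := by
        intro n
        have h : ((n*(n-1)/2 : ℕ):ℂ) = (↑(n*(n+1)/2) : ℂ) - (n:ℂ) := by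
          have := tri_pred n
          push_cast [← this]
          ring
        rw [h]; ring
      rw [tsum_congr e, Summable.tsum_sub SA SB, hA, hB, sub_zero]
    -- peel two zero terms off hC
    have hC2 : (∑' n : ℕ, (↑((n+1+1)*((n+1+1)-1)/2) : ℂ) * q ^ ((n+1+1)*((n+1+1)+1)/2) * x ^ (n+1+1)) = 0 := by
      have e1 := Summable.tsum_eq_zero_add SC
      have e2 := Summable.tsum_eq_zero_add ((summable_nat_add_iff 1).mpr SC)
      rw [e2] at e1
      rw [hC] at e1
      norm_num at e1
      exact e1.symm
    -- rewrite as q^3 x^2 S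
    have hx2 : x ≠ 0 := hx0
    have e3 : (∑' n : ℕ, (↑((n+1+1)*((n+1+1)-1)/2) : ℂ) * q ^ ((n+1+1)*((n+1+1)+1)/2) * x ^ (n+1+1))
        = q^3 * x^2 * ∑' n : ℕ, (↑((n+1)*(n+2)/2):ℂ) * q ^ (n*(n+5)/2) * x ^ n := by
      rw [← tsum_mul_left]
      apply tsum_congr; intro n
      show (↑((n+2)*(n+1)/2) : ℂ) * q ^ ((n+2)*(n+3)/2) * x ^ (n+2) = _
      rw [exp_shift n, pow_add q, pow_add x, mul_comm (n+2) (n+1)]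
      ring
    rw [e3] at hC2
    have hS : (∑' n : ℕ, (↑((n+1)*(n+2)/2):ℂ) * q ^ (n*(n+5)/2) * x ^ n) = 0 := by
      have hne : q^3 * x^2 ≠ 0 := mul_ne_zero (pow_ne_zero _ hq0) (pow_ne_zero _ hx2)
      rcases mul_eq_zero.mp hC2 with h | h
      · exact absurd h hne
      · exact h
    -- peel the first term (= 1) of S
    have e4 := Summable.tsum_eq_zero_add Sd
    rw [hS] at e4
    norm_num at e4
    -- e4 should say the shifted sum = -1 (or 0 = 1 + T); extract
    have hT : (∑' b : ℕ, (↑((b+1+1)*(b+1+2)/2):ℂ) * q ^ ((b+1)*(b+1+5)/2) * x ^ (b+1)) = -1 := by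
      linear_combination -e4
    have Snorm : Summable (fun n : ℕ => ‖(↑((n+1)*(n+2)/2):ℂ) * q ^ (n*(n+5)/2) * x ^ n‖) :=
      summable_norm_iff.mpr Sd
    have Snorm1 : Summable (fun n : ℕ => ‖(↑((n+1+1)*(n+1+2)/2):ℂ) * q ^ ((n+1)*(n+1+5)/2) * x ^ (n+1)‖) :=
      (summable_nat_add_iff 1).mpr Snorm
    have hTle : (1:ℝ) ≤ ∑' n : ℕ, ‖(↑((n+1+1)*(n+1+2)/2):ℂ) * q ^ ((n+1)*(n+1+5)/2) * x ^ (n+1)‖ := by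
      have h := norm_tsum_le_tsum_norm Snorm1
      rw [hT] at h
      simpa using h
    have e5 := Summable.tsum_eq_zero_add Snorm1
    have e6 := Summable.tsum_eq_zero_add ((summable_nat_add_iff 1).mpr Snorm1)
    rw [e6] at e5
    rw [e5] at hTle
    beta_reduce at hTle
    -- head bounds
    have h1 := head1 hq' hx
    have h2 := head2 hq' hx
    have hbound := tailbound hq' hx
    have hgeom : Summable (fun n : ℕ => ((3:ℝ)^3*(0.31:ℝ)^12*8.842^3) * (3*(0.31:ℝ)^5*8.842)^n) :=
      (summable_geometric_of_lt_one (by norm_num) (by norm_num)).mul_left _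
    have tail_le : (∑' n : ℕ, ‖(↑((n+1+1+1+1)*(n+1+1+1+2)/2):ℂ) * q ^ ((n+1+1+1)*(n+1+1+1+5)/2) * x ^ (n+1+1+1)‖)
        ≤ ((3:ℝ)^3*(0.31:ℝ)^12*8.842^3) * (1 - 3*(0.31:ℝ)^5*8.842)⁻¹ := by
      calc (∑' n : ℕ, ‖(↑((n+1+1+1+1)*(n+1+1+1+2)/2):ℂ) * q ^ ((n+1+1+1)*(n+1+1+1+5)/2) * x ^ (n+1+1+1)‖)
          ≤ ∑' n : ℕ, ((3:ℝ)^3*(0.31:ℝ)^12*8.842^3) * (3*(0.31:ℝ)^5*8.842)^n := by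
            apply Summable.tsum_le_tsum (fun n => hbound n)
              ((summable_nat_add_iff 1).mpr ((summable_nat_add_iff 1).mpr Snorm1)) hgeom
        _ = ((3:ℝ)^3*(0.31:ℝ)^12*8.842^3) * (1 - 3*(0.31:ℝ)^5*8.842)⁻¹ := by
            rw [tsum_mul_left, tsum_geometric_of_lt_one (by norm_num) (by norm_num)]
    have sum_le := add_le_add h1 (add_le_add h2 tail_le)
    have final := le_trans hTle sum_le
    norm_num at final
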